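/- Let A be a consistent layered automaton over a finite alphabet Σ. Then an infinite word w ∈ Σ^ω is accepted by A under layered acceptance if and only if w ∈ L(⟦A⟧). Moreover, ⟦A⟧ is uniformly semantically deterministic, i.e. L(⟦A⟧,p) = L(⟦A⟧,q) for all leaf states p, q with μ̂₁(p) = μ̂₁(q). -/

import Mathlib

open scoped Classical

noncomputable section

/-! ### Infinite words and the parity condition -/

/-- The minimal value occurring infinitely often in a sequence of priorities;
for (eventually) bounded sequences this is the `liminf`. -/
def minInfOften (pi : ℕ → ℕ) : ℕ := sInf {x : ℕ | ∀ N : ℕ, ∃ n : ℕ, N ≤ n ∧ pi n = x}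

/-- The (min-)parity acceptance condition: the liminf of the priorities is even. -/
def ParityAccept (pi : ℕ → ℕ) : Prop := Even (minInfOften pi)

/-- Prepend a finite word to an infinite word. -/
def prependW {α : Type} (u : List α) (w : ℕ → α) : ℕ → α := fun i =>
  if h : i < u.length then u.get ⟨i, h⟩ else w (i - u.length)

/-- The prefix of length `n` of an infinite word, as a list. -/
def wordPrefix {α : Type} (w : ℕ → α) (n : ℕ) : List α := List.ofFn (fun i : Fin n => w i)

/-- Drop the first `n` letters of an infinite word. -/
def wordDrop {α : Type} (w : ℕ → α) (n : ℕ) : ℕ → α := fun i => w (n + i)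

/-- The periodic infinite word `v^ω` (junk if `v = []`). -/
def perWord {α : Type} [Inhabited α] (v : List α) : ℕ → α := fun i => v.getD (i % v.length) default

/-! ### Layered automata -/

/-- A layered automaton over the alphabet `α` with `d` layers.  The (disjoint) layers
are encoded by the function `layer : Q → [1,d]`; each layer is a deterministic
transition system (partial transition function `δ`, which stays inside the layer);
`μ` sends each state of layer `x+1` to its parent in layer `x` (and is the identity
on layer `1`) and is a morphism of transition systems; layer `1` is complete, carries
the initial state, and all its states are reachable from the initial state. -/
structure Layered (Q α : Type) (d : ℕ) where
  layer : Q → ℕ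
  layer_pos : ∀ q, 1 ≤ layer q
  layer_le : ∀ q, layer q ≤ d
  δ : Q → α → Option Q
  δ_layer : ∀ q a q', δ q a = some q' → layer q' = layer q
  μ : Q → Q
  μ_layer : ∀ q, 1 < layer q → layer (μ q) + 1 = layer q
  μ_id : ∀ q, layer q = 1 → μ q = q
  μ_morph : ∀ q a q', 1 < layer q → δ q a = some q' → δ (μ q) a = some (μ q')
  init : Q
  init_layer : layer init = 1
  complete1 : ∀ q a, layer q = 1 → (δ q a).isSome = true
  reach1 : ∀ q, layer q = 1 →
    Relation.ReflTransGen (fun p p' => layer p = 1 ∧ ∃ a, δ p a = some p') init q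

namespace Layered

variable {Q R α : Type} {d d' : ℕ}

/-- The run of the (deterministic) layer transition systems on a finite word. -/
def runList (A : Layered Q α d) : Q → List α → Option Q
  | q, [] => some q
  | q, a :: u =>
    match A.δ q a with
    | some q' => runList A q' u
    | none => none

/-- `μ̂_x q`: the ancestor of `q` in layer `x` (image under the composed morphisms). -/
def muHat (A : Layered Q α d) (x : ℕ) (q : Q) : Q := (A.μ)^[A.layer q - x] q

/-- A leaf state: a state that is not in the image of any of the morphisms `μ_x`. -/
def IsLeaf (A : Layered Q α d) (q : Q) : Prop := ∀ p, 1 < A.layer p → A.μ p ≠ q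

/-- `layer(q,a)`: the largest layer `x ≤ layer q` in which `δ_x (μ̂_x q) a` is defined. -/
def layerOf (A : Layered Q α d) (q : Q) (a : α) : ℕ :=
  Nat.findGreatest (fun x => (A.δ (A.muHat x q) a).isSome = true) (A.layer q)

/-- A state `p` is an ancestor of `q`. -/
def IsAncestor (A : Layered Q α d) (p q : Q) : Prop :=
  A.layer p ≤ A.layer q ∧ A.muHat (A.layer p) q = p

/-! #### Safe languages and strong acceptance -/

/-- Membership of a finite word in the `x`-safe language of `q`. -/
def SafeFin (A : Layered Q α d) (x : ℕ) (q : Q) (u : List α) : Prop :=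
  (A.runList (A.muHat x q) u).isSome = true

/-- Membership of an infinite word in the `x`-safe language of `q`. -/
def SafeInf (A : Layered Q α d) (x : ℕ) (q : Q) (w : ℕ → α) : Prop :=
  ∀ n : ℕ, A.SafeFin x q (wordPrefix w n)

/-- `w` is strongly accepted by the state `p` (which lies in the even layer `x = layer p`):
`w` is `x`-safe from `p` and no decomposition `w = u·w'` admits a state `p'` of layer `x+1`
with a `u`-run from `p` to the parent of `p'` in `T_x` such that `w'` is `(x+1)`-safe from `p'`. -/
def StronglyAcc (A : Layered Q α d) (p : Q) (w : ℕ → α) : Prop :=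
  Even (A.layer p) ∧ A.SafeInf (A.layer p) p w ∧
  ∀ (n : ℕ) (p' : Q), A.layer p' = A.layer p + 1 →
    A.runList p (wordPrefix w n) = some (A.μ p') →
    ¬ A.SafeInf (A.layer p') p' (wordDrop w n)

/-- `w` is strongly rejected by `p` (lying in an odd layer). -/
def StronglyRej (A : Layered Q α d) (p : Q) (w : ℕ → α) : Prop :=
  Odd (A.layer p) ∧ A.SafeInf (A.layer p) p w ∧
  ∀ (n : ℕ) (p' : Q), A.layer p' = A.layer p + 1 →
    A.runList p (wordPrefix w n) = some (A.μ p') →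
    ¬ A.SafeInf (A.layer p') p' (wordDrop w n)

/-- Consistency: no two states with the same layer-1 ancestor strongly accept
resp. strongly reject a common infinite word. -/
def Consistent (A : Layered Q α d) : Prop :=
  ¬ ∃ (p p' : Q) (w : ℕ → α), A.muHat 1 p = A.muHat 1 p' ∧
      A.StronglyAcc p w ∧ A.StronglyRej p' w

/-- `w` is ultimately safe in layer `x`, for the automaton started in the
layer-1 state `q0`. -/
def UltSafeFrom (A : Layered Q α d) (q0 : Q) (x : ℕ) (w : ℕ → α) : Prop :=
  ∃ (n : ℕ) (p : Q), A.layer p = x ∧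
    A.runList q0 (wordPrefix w n) = some (A.muHat 1 p) ∧
    A.SafeInf x p (wordDrop w n)

/-- Layered acceptance from `q0`: the maximal layer in which `w` is ultimately safe is even. -/
def LayeredAcceptFrom (A : Layered Q α d) (q0 : Q) (w : ℕ → α) : Prop :=
  ∃ x : ℕ, Even x ∧ A.UltSafeFrom q0 x w ∧ ∀ y : ℕ, A.UltSafeFrom q0 y w → y ≤ x

/-- Layered rejection from `q0`: the maximal layer in which `w` is ultimately safe is odd. -/
def LayeredRejectFrom (A : Layered Q α d) (q0 : Q) (w : ℕ → α) : Prop :=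
  ∃ x : ℕ, Odd x ∧ A.UltSafeFrom q0 x w ∧ ∀ y : ℕ, A.UltSafeFrom q0 y w → y ≤ x

/-! #### The semantics automaton `⟦A⟧` (a simple-by-priorities alternating parity automaton) -/

/-- The priority of the letter `a` in the state `q` of `⟦A⟧`. -/
def semPrio (A : Layered Q α d) (q : Q) (a : α) : ℕ := A.layerOf q a

/-- The transitions of `⟦A⟧` (between leaf states): `q —a→ q'` iff, for
`x = layer(q,a)`, we have `δ_x (μ̂_x q) a = μ̂_x q'`; the transition carries priority `x`. -/
def semStep (A : Layered Q α d) (q : Q) (a : α) (q' : Q) : Prop :=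
  A.IsLeaf q' ∧ A.δ (A.muHat (A.layerOf q a) q) a = some (A.muHat (A.layerOf q a) q')

/-- Runs of `⟦A⟧` over the infinite word `w`, starting in `p`. -/
def IsSemRun (A : Layered Q α d) (w : ℕ → α) (p : Q) (ρ : ℕ → Q) : Prop :=
  ρ 0 = p ∧ ∀ i : ℕ, A.semStep (ρ i) (w i) (ρ (i + 1))

/-- The sequence of priorities produced by a run of `⟦A⟧` over `w`. -/
def runPrios (A : Layered Q α d) (w : ℕ → α) (ρ : ℕ → Q) : ℕ → ℕ :=
  fun i => A.semPrio (ρ i) (w i)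

/-- A resolver for Eve in `⟦A⟧`: given the history (the finite run so far, as a list of
(state, letter) pairs), the current state and a letter of odd priority, it picks a successor. -/
def EveResolver (A : Layered Q α d) (σ : List (Q × α) → Q → α → Q) : Prop :=
  ∀ (h : List (Q × α)) (q : Q) (a : α), Odd (A.semPrio q a) → A.semStep q a (σ h q a)

/-- A resolver for Adam in `⟦A⟧` (resolving the even-priority steps). -/
def AdamResolver (A : Layered Q α d) (τ : List (Q × α) → Q → α → Q) : Prop :=
  ∀ (h : List (Q × α)) (q : Q) (a : α), Even (A.semPrio q a) → A.semStep q a (τ h q a)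

/-- A run is consistent with the Eve-resolver `σ`: every odd-priority step follows `σ`. -/
def ConsEve (A : Layered Q α d) (σ : List (Q × α) → Q → α → Q) (w : ℕ → α) (ρ : ℕ → Q) : Prop :=
  ∀ i : ℕ, Odd (A.semPrio (ρ i) (w i)) →
    ρ (i + 1) = σ (List.ofFn fun j : Fin i => (ρ (j : ℕ), w (j : ℕ))) (ρ i) (w i)

/-- A run is consistent with the Adam-resolver `τ`: every even-priority step follows `τ`. -/
def ConsAdam (A : Layered Q α d) (τ : List (Q × α) → Q → α → Q) (w : ℕ → α) (ρ : ℕ → Q) : Prop :=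
  ∀ i : ℕ, Even (A.semPrio (ρ i) (w i)) →
    ρ (i + 1) = τ (List.ofFn fun j : Fin i => (ρ (j : ℕ), w (j : ℕ))) (ρ i) (w i)

/-- Acceptance of `w` by `⟦A⟧` from the (leaf) state `p`: Eve has a winning strategy
in the game `G(⟦A⟧,w)`, i.e. a resolver all of whose consistent runs satisfy parity. -/
def SemAccept (A : Layered Q α d) (p : Q) (w : ℕ → α) : Prop :=
  ∃ σ : List (Q × α) → Q → α → Q, A.EveResolver σ ∧
    ∀ ρ : ℕ → Q, A.IsSemRun w p ρ → A.ConsEve σ w ρ → ParityAccept (A.runPrios w ρ)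

/-- Uniform semantic determinism: leaf states with the same layer-1 ancestor
recognise the same language in `⟦A⟧`. -/
def UnifSD (A : Layered Q α d) : Prop :=
  ∀ p q : Q, A.IsLeaf p → A.IsLeaf q → A.muHat 1 p = A.muHat 1 q →
    ∀ w : ℕ → α, (A.SemAccept p w ↔ A.SemAccept q w)

/-! #### Longest suffix resolvers -/

/-- `v` is a suffix-witness to `r`: the layer of `r` has a run labelled `v` ending in `r`. -/
def suffixReaches (A : Layered Q α d) (r : Q) (v : List α) : Prop :=
  ∃ p : Q, A.layer p = A.layer r ∧ A.runList p v = some r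

/-- The length of the longest suffix `v` of `u` such that the layer of `r` has a
run labelled `v` ending in `r`. -/
def longestSuffixLen (A : Layered Q α d) (u : List α) (r : Q) : ℕ :=
  Nat.findGreatest (fun k => k ≤ u.length ∧ A.suffixReaches r (u.drop (u.length - k))) u.length

/-- A longest suffix resolver for Eve, initialised to `u0`: a valid Eve-resolver that,
at a step of odd priority `x` after having read `v`, moves to an `a`-successor `q'`
maximising the length of the longest `(x+1)`-suffix of `u0·v·a` to `μ̂_{x+1} q'`. -/
def IsLongestSuffixResolverE (A : Layered Q α d) (u0 : List α)
    (σ : List (Q × α) → Q → α → Q) : Prop :=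
  A.EveResolver σ ∧
  ∀ (h : List (Q × α)) (q : Q) (a : α), Odd (A.semPrio q a) →
    ∀ q' : Q, A.semStep q a q' →
      A.longestSuffixLen (u0 ++ h.map Prod.snd ++ [a]) (A.muHat (A.semPrio q a + 1) q') ≤
      A.longestSuffixLen (u0 ++ h.map Prod.snd ++ [a]) (A.muHat (A.semPrio q a + 1) (σ h q a))

/-- A longest suffix resolver for Adam, initialised to `u0` (symmetric, for even priorities). -/
def IsLongestSuffixResolverA (A : Layered Q α d) (u0 : List α)
    (τ : List (Q × α) → Q → α → Q) : Prop :=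
  A.AdamResolver τ ∧
  ∀ (h : List (Q × α)) (q : Q) (a : α), Even (A.semPrio q a) →
    ∀ q' : Q, A.semStep q a q' →
      A.longestSuffixLen (u0 ++ h.map Prod.snd ++ [a]) (A.muHat (A.semPrio q a + 1) q') ≤
      A.longestSuffixLen (u0 ++ h.map Prod.snd ++ [a]) (A.muHat (A.semPrio q a + 1) (τ h q a))

/-! #### The random walk on `⟦A⟧` -/

/-- The uniform step probability of the random walk of `⟦A⟧`. -/
def stepProb (A : Layered Q α d) (q : Q) (a : α) (q' : Q) : ENNReal :=
  if A.semStep q a q' then ((Nat.card {p : Q // A.semStep q a p} : ENNReal))⁻¹ else 0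

/-- `m` is the Markov measure of the random walk of `⟦A⟧` over the word `w` started at `p`:
a probability measure on `ℕ → Q` whose cylinder probabilities are the products of the
uniform step probabilities. -/
def IsWalkMeasure [MeasurableSpace Q] (A : Layered Q α d) (w : ℕ → α) (p : Q)
    (m : MeasureTheory.Measure (ℕ → Q)) : Prop :=
  MeasureTheory.IsProbabilityMeasure m ∧
  ∀ (n : ℕ) (s : Fin (n + 1) → Q),
    m {ρ : ℕ → Q | ∀ i : Fin (n + 1), ρ (i : ℕ) = s i} =
      (if s 0 = p then 1 else 0) *
        ∏ i : Fin n, A.stepProb (s i.castSucc) (w (i : ℕ)) (s i.succ)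

/-! #### Normal form, centrality, safe minimality, central sequences -/

/-- Normal form: (N1) every layer `x ≥ 2` is a union of non-trivial SCCs, and
(N2) the safe language of every child is strictly smaller than that of its parent. -/
def NormalForm (A : Layered Q α d) : Prop :=
  ∀ q : Q, 2 ≤ A.layer q →
    (∀ (u : List α) (q' : Q), A.runList q u = some q' →
      ∃ v : List α, v ≠ [] ∧ A.runList q' v = some q) ∧
    (∀ p : Q, 1 < A.layer p → A.μ p = q →
      ∃ u : List α, (A.runList q u).isSome = true ∧ A.runList p u = none)

/-- Inclusion of `x`-safe languages. -/
def SafeLE (A : Layered Q α d) (x : ℕ) (p q : Q) : Prop :=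
  (∀ u : List α, A.SafeFin x p u → A.SafeFin x q u) ∧
  (∀ w : ℕ → α, A.SafeInf x p w → A.SafeInf x q w)

/-- Centralised: siblings (same parent) whose safe languages are included,
lie in the same SCC of their layer. -/
def Centralised (A : Layered Q α d) : Prop :=
  ∀ p q : Q, 2 ≤ A.layer p → A.layer q = A.layer p →
    A.muHat (A.layer p - 1) p = A.muHat (A.layer p - 1) q →
    A.SafeLE (A.layer p) p q →
    (∃ u : List α, A.runList p u = some q) ∧ (∃ v : List α, A.runList q v = some p)

/-- `L(p) = L(q)`: all leaves above (the layer-1 ancestor of) `p` and all leaves above `q`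
recognise the same language in `⟦A⟧`. -/
def LangEq1 (A : Layered Q α d) (p q : Q) : Prop :=
  ∀ l l' : Q, A.IsLeaf l → A.IsLeaf l' → A.muHat 1 l = A.muHat 1 p →
    A.muHat 1 l' = A.muHat 1 q → ∀ w : ℕ → α, (A.SemAccept l w ↔ A.SemAccept l' w)

/-- The equivalence `p ≈_x q`: language equivalence together with equality of all
`y`-safe languages for `2 ≤ y ≤ x`. -/
def ApproxEq (A : Layered Q α d) (x : ℕ) (p q : Q) : Prop :=
  A.LangEq1 p q ∧ ∀ y : ℕ, 2 ≤ y → y ≤ x →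
    ((∀ u : List α, A.SafeFin y p u ↔ A.SafeFin y q u) ∧
     (∀ w : ℕ → α, A.SafeInf y p w ↔ A.SafeInf y q w))

/-- Safe minimality: `≈_x`-equivalent states of the same layer are equal. -/
def SafeMinimal (A : Layered Q α d) : Prop :=
  ∀ p q : Q, A.layer p = A.layer q → A.ApproxEq (A.layer p) p q → p = q

/-- `z` is a central sequence for the state `p` (of layer `x = layer p`). -/
def IsCentralSeq (A : Layered Q α d) (p : Q) (z : List α) : Prop :=
  z ≠ [] ∧ A.runList p z = some p ∧
  (∀ q : Q, A.layer q = A.layer p →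
    A.muHat (A.layer p - 1) q = A.muHat (A.layer p - 1) p →
    (A.runList q z = some p ∨ A.runList q z = none)) ∧
  (∀ q' : Q, A.layer q' = A.layer p + 1 →
    A.muHat (A.layer p - 1) q' = A.muHat (A.layer p - 1) p →
    A.runList q' z = none)

end Layered

/-! ### Morphisms of layered automata -/

/-- A morphism of layered automata. -/
structure IsLayMorphism {Q R α : Type} {d d' : ℕ} (A : Layered Q α d) (B : Layered R α d')
    (φ : Q → R) : Prop where
  map_init : φ A.init = B.init
  map_step : ∀ q a q', A.δ q a = some q' → B.δ (φ q) a = some (φ q')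
  map_anc : ∀ p q, A.IsAncestor p q → B.IsAncestor (φ p) (φ q)

/-- A strong morphism of layered automata additionally preserves non-transitions. -/
def IsStrongLayMorphism {Q R α : Type} {d d' : ℕ} (A : Layered Q α d) (B : Layered R α d')
    (φ : Q → R) : Prop :=
  IsLayMorphism A B φ ∧ ∀ q a, A.δ q a = none → B.δ (φ q) a = none

/-- An isomorphism of layered automata: a bijection on states that restricts to
isomorphisms of the layer transition systems, preserves the initial state, and
commutes with the morphisms `μ`. -/
structure IsLayIso {Q R α : Type} {d d' : ℕ} (A : Layered Q α d) (B : Layered R α d')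
    (φ : Q ≃ R) : Prop where
  map_layer : ∀ q, B.layer (φ q) = A.layer q
  map_init : φ A.init = B.init
  map_mu : ∀ q, φ (A.μ q) = B.μ (φ q)
  map_step : ∀ q a, (A.δ q a).map φ = B.δ (φ q) a

/-- `L(⟦A⟧) = L(⟦B⟧)`: the semantics automata (with any choice of initial leaf states
above the respective initial states) accept the same infinite words. -/
def SemLangEq {Q R α : Type} {d d' : ℕ} (A : Layered Q α d) (B : Layered R α d') : Prop :=
  ∀ (p : Q) (q : R), A.IsLeaf p → A.muHat 1 p = A.init → B.IsLeaf q → B.muHat 1 q = B.init →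
    ∀ w : ℕ → α, (A.SemAccept p w ↔ B.SemAccept q w)

/-! ### Deterministic parity automata -/

/-- A deterministic parity automaton over `α` with priorities in `[1,d]`. -/
structure DPA (Q α : Type) (d : ℕ) where
  init : Q
  next : Q → α → Q
  prio : Q → α → ℕ
  prio_pos : ∀ q a, 1 ≤ prio q a
  prio_le : ∀ q a, prio q a ≤ d

namespace DPA

variable {Q α : Type} {d : ℕ}

/-- The unique run of a DPA on an infinite word. -/
def run (B : DPA Q α d) (w : ℕ → α) : ℕ → Q
  | 0 => B.init
  | n + 1 => B.next (run B w n) (w n)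

/-- Acceptance by a DPA: the priorities along the unique run satisfy parity. -/
def Accepts (B : DPA Q α d) (w : ℕ → α) : Prop :=
  ParityAccept (fun i => B.prio (B.run w i) (w i))

end DPA

/-- `L` is ω-regular: recognised by some deterministic parity automaton. -/
def IsOmegaRegular {α : Type} (L : Set (ℕ → α)) : Prop :=
  ∃ (n d : ℕ) (B : DPA (Fin n) α d), ∀ w : ℕ → α, w ∈ L ↔ B.Accepts w

/-! ### Nondeterministic coBüchi automata -/

/-- A (complete) nondeterministic coBüchi automaton: transitions carry priorities in `{1,2}`. -/
structure NCA (Q α : Type) where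
  init : Q
  trans : Q → α → ℕ → Q → Prop
  prio_mem : ∀ q a x q', trans q a x q' → x = 1 ∨ x = 2
  complete : ∀ q a, ∃ x q', trans q a x q'

namespace NCA

variable {Q α : Type}

/-- Nondeterministic acceptance from the state `q`. -/
def AcceptFrom (B : NCA Q α) (q : Q) (w : ℕ → α) : Prop :=
  ∃ (ρ : ℕ → Q) (pri : ℕ → ℕ), ρ 0 = q ∧
    (∀ i : ℕ, B.trans (ρ i) (w i) (pri i) (ρ (i + 1))) ∧ ParityAccept pri

/-- Semantic determinism: every `a`-successor of `p` recognises `a⁻¹ L(p)`. -/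
def SemDet (B : NCA Q α) : Prop :=
  ∀ p a x q, B.trans p a x q →
    ∀ w : ℕ → α, (B.AcceptFrom q w ↔ B.AcceptFrom p (prependW [a] w))

/-- Safe determinism: all `a`-transitions from a state carry the same priority, and
there is at most one `a`-transition of priority `2` from each state. -/
def SafeDet (B : NCA Q α) : Prop :=
  (∀ q a x q' x' q'', B.trans q a x q' → B.trans q a x' q'' → x = x') ∧
  (∀ q a q' q'', B.trans q a 2 q' → B.trans q a 2 q'' → q' = q'')

/-- 1-saturation: priority-1 transitions go to all language-equivalent states. -/
def OneSaturated (B : NCA Q α) : Prop :=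
  ∀ q a p p', B.trans q a 1 p →
    (∀ w : ℕ → α, (B.AcceptFrom p' w ↔ B.AcceptFrom p w)) → B.trans q a 1 p'

end NCA

/-! ### Simple-by-priorities alternating parity automata (abstract) -/

/-- A simple-by-priorities alternating parity automaton: a complete transition system
over `α × [1,d]` in which all `a`-transitions from a state carry the same priority. -/
structure SPA (Q α : Type) (d : ℕ) where
  init : Q
  step : Q → α → Q → Prop
  prio : Q → α → ℕ
  prio_pos : ∀ q a, 1 ≤ prio q a
  prio_le : ∀ q a, prio q a ≤ d
  complete : ∀ q a, ∃ q', step q a q'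

/-! ### The congruence on tuples of finite words -/

/-- The data of the congruence at one level (tuples of a fixed length,
represented as reversed lists of components: the head is the last component). -/
structure CongrLevel (α : Type) where
  bot : List (List α) → Prop
  eq : List (List α) → List (List α) → Prop
  ptd : List (List α) → Prop

/-- Concatenate a finite word to the last component of a tuple
(tuples are represented as reversed lists: the head is the last component). -/
def tcat {α : Type} (t : List (List α)) (v : List α) : List (List α) :=
  match t with
  | h :: rest => (h ++ v) :: rest
  | [] => []

/-- Merge the last two components of a tuple. -/
def tmerge {α : Type} (t : List (List α)) : List (List α) :=
  match t with
  | u' :: h :: rest => (h ++ u') :: rest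
  | t' => t'

/-- The congruence data at level `n` (handling tuples of length `n+1`), defined by
recursion on the level, following the inductive definition of `≈ ⊥`, `≈` and `pointed`. -/
def congrData {α : Type} [Inhabited α] (L : Set (ℕ → α)) : ℕ → CongrLevel α
  | 0 =>
    { bot := fun _ => False
      eq := fun t s =>
        match t, s with
        | [u], [v] => ∀ w : ℕ → α, (prependW u w ∈ L ↔ prependW v w ∈ L)
        | _, _ => False
      ptd := fun _ => True }
  | n + 1 =>
    let C := congrData L n
    let bot : List (List α) → Prop := fun t =>
      match t with
      | u' :: ubar =>
        C.bot (tmerge (u' :: ubar)) ∨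
        ∀ w : List α, w ≠ [] → C.eq (tcat (tmerge (u' :: ubar)) w) ubar →
          ((prependW ubar.reverse.flatten (perWord (u' ++ w)) ∈ L) ↔ Even (n + 1))
      | [] => True
    let eq : List (List α) → List (List α) → Prop := fun t s =>
      C.eq (tmerge t) (tmerge s) ∧ ∀ v : List α, (bot (tcat t v) ↔ bot (tcat s v))
    let ptd : List (List α) → Prop := fun t =>
      match t with
      | u' :: ubar =>
        ¬ bot (u' :: ubar) ∧ C.ptd ubar ∧
        ∀ (vbar : List (List α)) (v' : List α), vbar.length = n + 1 → C.ptd vbar →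
          C.eq (tcat vbar v') ubar → ¬ bot ((v' ++ u') :: vbar) →
          eq ((v' ++ u') :: vbar) (u' :: ubar)
      | [] => False
    { bot := bot, eq := eq, ptd := ptd }

/-- `t ≈ ⊥` (for a nonempty tuple `t`, in reversed representation). -/
def TupBot {α : Type} [Inhabited α] (L : Set (ℕ → α)) (t : List (List α)) : Prop :=
  (congrData L (t.length - 1)).bot t

/-- `t ≈ s` (for nonempty tuples of the same length, in reversed representation). -/
def TupEq {α : Type} [Inhabited α] (L : Set (ℕ → α)) (t s : List (List α)) : Prop :=
  t.length = s.length ∧ (congrData L (t.length - 1)).eq t s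

/-- `t` is pointed. -/
def TupPointed {α : Type} [Inhabited α] (L : Set (ℕ → α)) (t : List (List α)) : Prop :=
  (congrData L (t.length - 1)).ptd t

/-- `cls` exhibits `A` as (a copy of) the congruence automaton `A_≈` of `L`: its states
are the `≈`-classes of pointed tuples (the layer being the tuple length), transitions
are given by concatenation in the last component, the initial state is the class of
`(ε)`, and the morphisms are given by merging the last two components. -/
structure IsCongrAut {α : Type} [Inhabited α] (L : Set (ℕ → α)) {Q : Type} {d : ℕ}
    (A : Layered Q α d) (cls : (t : List (List α)) → TupPointed L t → Q) : Prop where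
  surj : ∀ q : Q, ∃ (t : List (List α)) (ht : TupPointed L t), cls t ht = q
  cls_eq : ∀ t ht s hs, cls t ht = cls s hs ↔ TupEq L t s
  layer_eq : ∀ t ht, A.layer (cls t ht) = t.length
  init_eq : ∀ h : TupPointed L [([] : List α)], cls [([] : List α)] h = A.init
  step_some : ∀ t ht (a : α) (h' : TupPointed L (tcat t [a])),
    A.δ (cls t ht) a = some (cls (tcat t [a]) h')
  step_none : ∀ t ht (a : α), TupBot L (tcat t [a]) → A.δ (cls t ht) a = none
  mu_eq : ∀ (u' : List α) (ubar : List (List α)) (h : TupPointed L (u' :: ubar))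
    (h' : TupPointed L (tmerge (u' :: ubar))), ubar ≠ [] →
    A.μ (cls (u' :: ubar) h) = cls (tmerge (u' :: ubar)) h'

end
section Helpers

open Layered

namespace Layered

variable {Q α : Type} {d : ℕ}

/-! #### words -/

theorem wordPrefix_zero {α : Type} (w : ℕ → α) : wordPrefix w 0 = [] := rfl

theorem wordPrefix_succ {α : Type} (w : ℕ → α) (n : ℕ) :
    wordPrefix w (n + 1) = wordPrefix w n ++ [w n] := by
  unfold wordPrefix
  rw [List.ofFn_succ', List.concat_eq_append]
  simp

theorem wordPrefix_length {α : Type} (w : ℕ → α) (n : ℕ) : (wordPrefix w n).length = n := by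
  simp [wordPrefix]

theorem wordDrop_zero {α : Type} (w : ℕ → α) : wordDrop w 0 = w := by
  funext i; simp [wordDrop]

theorem wordDrop_wordDrop {α : Type} (w : ℕ → α) (m n : ℕ) :
    wordDrop (wordDrop w m) n = wordDrop w (m + n) := by
  funext i; simp [wordDrop, Nat.add_assoc]

theorem wordDrop_apply {α : Type} (w : ℕ → α) (m n : ℕ) : wordDrop w m n = w (m + n) := rfl

theorem wordPrefix_add {α : Type} (w : ℕ → α) (m n : ℕ) :
    wordPrefix w (m + n) = wordPrefix w m ++ wordPrefix (wordDrop w m) n := by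
  induction n with
  | zero => simp [wordPrefix_zero]
  | succ n ih =>
    rw [show m + (n + 1) = (m + n) + 1 by omega, wordPrefix_succ, ih, wordPrefix_succ,
      List.append_assoc, wordDrop_apply]

/-! #### runList -/

variable (A : Layered Q α d)

theorem runList_nil (q : Q) : A.runList q [] = some q := rfl

theorem runList_cons (q : Q) (a : α) (u : List α) :
    A.runList q (a :: u) = (A.δ q a).bind (fun p => A.runList p u) := by
  cases h : A.δ q a <;> simp [runList, h]

theorem runList_singleton (q : Q) (a : α) : A.runList q [a] = A.δ q a := by
  rw [runList_cons]; cases h : A.δ q a <;> simp [runList]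

theorem runList_append (q : Q) (u v : List α) :
    A.runList q (u ++ v) = (A.runList q u).bind (fun p => A.runList p v) := by
  induction u generalizing q with
  | nil => simp [runList_nil]
  | cons a u ih =>
    rw [List.cons_append, runList_cons, runList_cons]
    cases h : A.δ q a <;> simp [ih]

theorem layer_runList {q q' : Q} {u : List α} (h : A.runList q u = some q') :
    A.layer q' = A.layer q := by
  induction u generalizing q with
  | nil => rw [runList_nil] at h; cases h; rfl
  | cons a u ih =>
    rw [runList_cons] at h
    cases hd : A.δ q a with
    | none => rw [hd] at h; simp at h
    | some p => rw [hd] at h; simp at h; rw [ih h, A.δ_layer q a p hd]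

/-! #### μ and muHat -/

theorem mu_eq_of_layer_one {p p' : Q} (hp : A.layer p = 1) : A.μ p = p :=
  A.μ_id p hp

theorem mu_step {q q' : Q} {a : α} (h : A.δ q a = some q') (k : ℕ) :
    A.δ ((A.μ)^[k] q) a = some ((A.μ)^[k] q') := by
  induction k generalizing q q' with
  | zero => simpa using h
  | succ k ih =>
    rw [Function.iterate_succ_apply', Function.iterate_succ_apply']
    have hk := ih h
    by_cases h1 : 1 < A.layer ((A.μ)^[k] q)
    · exact A.μ_morph _ a _ h1 hk
    · have hl1 : A.layer ((A.μ)^[k] q) = 1 := by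
        have := A.layer_pos ((A.μ)^[k] q); omega
      have hl2 : A.layer ((A.μ)^[k] q') = 1 := by
        rw [A.δ_layer _ a _ hk, hl1]
      rw [A.μ_id _ hl1, A.μ_id _ hl2]; exact hk

theorem runList_iterate_mu {q q' : Q} {u : List α} (h : A.runList q u = some q') (k : ℕ) :
    A.runList ((A.μ)^[k] q) u = some ((A.μ)^[k] q') := by
  induction u generalizing q with
  | nil => rw [runList_nil] at h ⊢; cases h; rfl
  | cons a u ih =>
    rw [runList_cons] at h ⊢
    cases hd : A.δ q a with
    | none => rw [hd] at h; simp at h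
    | some p =>
      rw [hd] at h; simp at h
      rw [A.mu_step hd k]; simpa using ih h

theorem layer_iterate_mu {q : Q} {k : ℕ} (h : k < A.layer q) :
    A.layer ((A.μ)^[k] q) = A.layer q - k := by
  induction k with
  | zero => simp
  | succ k ih =>
    have hk : k < A.layer q := by omega
    rw [Function.iterate_succ_apply']
    have h1 : 1 < A.layer ((A.μ)^[k] q) := by rw [ih hk]; omega
    have := A.μ_layer _ h1
    rw [ih hk] at this; omega

theorem muHat_of_le {q : Q} {x : ℕ} (h : A.layer q ≤ x) : A.muHat x q = q := by
  unfold muHat; rw [Nat.sub_eq_zero_of_le h]; rfl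

theorem layer_muHat {q : Q} {x : ℕ} (h1 : 1 ≤ x) (h2 : x ≤ A.layer q) :
    A.layer (A.muHat x q) = x := by
  rcases eq_or_lt_of_le h2 with h | h
  · rw [A.muHat_of_le h.ge]; omega
  · unfold muHat
    rw [A.layer_iterate_mu (by omega)]; omega

theorem le_layer_of_layer_muHat {q : Q} {x : ℕ} (h : A.layer (A.muHat x q) = x) :
    x ≤ A.layer q := by
  by_contra hc
  push_neg at hc
  rw [A.muHat_of_le hc.le] at h; omega

theorem muHat_muHat {q : Q} {x y : ℕ} (hx : 1 ≤ x) (hxy : x ≤ y) :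
    A.muHat x (A.muHat y q) = A.muHat x q := by
  by_cases hy : A.layer q ≤ y
  · rw [A.muHat_of_le hy]
  · push_neg at hy
    have hly : A.layer (A.muHat y q) = y := A.layer_muHat (by omega) hy.le
    show (A.μ)^[A.layer (A.muHat y q) - x] (A.muHat y q) = _
    rw [hly]
    unfold muHat
    rw [← Function.iterate_add_apply]
    congr 1
    omega

theorem delta_muHat {q q' : Q} {a : α} (h : A.δ q a = some q') (x : ℕ) :
    A.δ (A.muHat x q) a = some (A.muHat x q') := by
  unfold muHat
  rw [A.δ_layer q a q' h]
  exact A.mu_step h _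

theorem runList_muHat {q q' : Q} {u : List α} (h : A.runList q u = some q') (x : ℕ) :
    A.runList (A.muHat x q) u = some (A.muHat x q') := by
  unfold muHat
  rw [A.layer_runList h]
  exact A.runList_iterate_mu h _

theorem muHat_mu {p : Q} {x : ℕ} (h1 : 1 < A.layer p) (hx : x ≤ A.layer p - 1) :
    A.muHat x (A.μ p) = A.muHat x p := by
  have hμ := A.μ_layer p h1
  unfold muHat
  have : A.layer p - x = (A.layer (A.μ p) - x) + 1 := by omega
  rw [this, Function.iterate_succ_apply]

theorem complete1_runList {q : Q} (h : A.layer q = 1) (u : List α) :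
    (A.runList q u).isSome = true := by
  induction u generalizing q with
  | nil => simp [runList_nil]
  | cons a u ih =>
    rw [runList_cons]
    have hs := A.complete1 q a h
    cases hd : A.δ q a with
    | none => rw [hd] at hs; simp at hs
    | some p =>
      have hp : A.layer p = 1 := by rw [A.δ_layer q a p hd, h]
      simpa using ih hp

/-! #### layerOf / semPrio -/

theorem one_le_layerOf (q : Q) (a : α) : 1 ≤ A.layerOf q a := by
  apply Nat.le_findGreatest (A.layer_pos q)
  have h1 : A.layer (A.muHat 1 q) = 1 := A.layer_muHat le_rfl (A.layer_pos q)
  exact A.complete1 _ a h1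

theorem layerOf_le (q : Q) (a : α) : A.layerOf q a ≤ A.layer q :=
  Nat.findGreatest_le _

theorem layerOf_isSome (q : Q) (a : α) :
    (A.δ (A.muHat (A.layerOf q a) q) a).isSome = true := by
  exact Nat.findGreatest_of_ne_zero
    (P := fun x => (A.δ (A.muHat x q) a).isSome = true) (n := A.layer q) rfl
    (Nat.one_le_iff_ne_zero.mp (A.one_le_layerOf q a))

theorem le_layerOf_of_isSome {q : Q} {a : α} {x : ℕ} (hx : x ≤ A.layer q)
    (h : (A.δ (A.muHat x q) a).isSome = true) : x ≤ A.layerOf q a :=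
  Nat.le_findGreatest hx h

theorem one_le_semPrio (q : Q) (a : α) : 1 ≤ A.semPrio q a := A.one_le_layerOf q a

theorem semPrio_le_layer (q : Q) (a : α) : A.semPrio q a ≤ A.layer q := A.layerOf_le q a

theorem semPrio_le_d (q : Q) (a : α) : A.semPrio q a ≤ d :=
  le_trans (A.semPrio_le_layer q a) (A.layer_le q)

/-! #### leaves and completeness of the semantics automaton -/

theorem exists_leaf_above (r : Q) : ∃ l : Q, A.IsLeaf l ∧ A.muHat (A.layer r) l = r := by
  have H : ∀ k r, d - A.layer r ≤ k → ∃ l : Q, A.IsLeaf l ∧ A.muHat (A.layer r) l = r := by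
    intro k
    induction k with
    | zero =>
      intro r hr
      by_cases hleaf : A.IsLeaf r
      · exact ⟨r, hleaf, by unfold muHat; simp⟩
      · exfalso
        unfold IsLeaf at hleaf
        push_neg at hleaf
        obtain ⟨p, hp1, hp2⟩ := hleaf
        have h3 := A.μ_layer p hp1
        rw [hp2] at h3
        have h4 := A.layer_le p
        omega
    | succ k ih =>
      intro r hr
      by_cases hleaf : A.IsLeaf r
      · exact ⟨r, hleaf, by unfold muHat; simp⟩
      · unfold IsLeaf at hleaf
        push_neg at hleaf
        obtain ⟨p, hp1, hp2⟩ := hleaf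
        have hlp := A.μ_layer p hp1
        rw [hp2] at hlp
        obtain ⟨l, hl, hml⟩ := ih p (by have := A.layer_le p; omega)
        refine ⟨l, hl, ?_⟩
        have h1 : A.muHat (A.layer r) l = A.muHat (A.layer r) (A.muHat (A.layer p) l) :=
          (A.muHat_muHat (A.layer_pos r) (by omega)).symm
        rw [h1, hml]
        show (A.μ)^[A.layer p - A.layer r] p = r
        rw [show A.layer p - A.layer r = 1 by omega]
        simpa using hp2
  exact H (d - A.layer r) r le_rfl

theorem semStep_total (q : Q) (a : α) : ∃ q', A.semStep q a q' := by
  obtain ⟨t, ht⟩ := Option.isSome_iff_exists.1 (A.layerOf_isSome q a)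
  have hlt : A.layer t = A.layerOf q a := by
    rw [A.δ_layer _ a _ ht]
    exact A.layer_muHat (A.one_le_layerOf q a) (A.layerOf_le q a)
  obtain ⟨l, hl, hml⟩ := A.exists_leaf_above t
  refine ⟨l, hl, ?_⟩
  have hml' : A.muHat (A.layerOf q a) l = t := by rw [← hlt]; exact hml
  rw [hml']
  exact ht

/-! #### projections of semantic steps -/

theorem layer_muHat_layerOf {q q' : Q} {a : α} (h : A.semStep q a q') :
    A.layer (A.muHat (A.layerOf q a) q') = A.layerOf q a := by
  rw [A.δ_layer _ a _ h.2]
  exact A.layer_muHat (A.one_le_layerOf q a) (A.layerOf_le q a)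

theorem layerOf_le_layer_target {q q' : Q} {a : α} (h : A.semStep q a q') :
    A.layerOf q a ≤ A.layer q' :=
  A.le_layer_of_layer_muHat (A.layer_muHat_layerOf h)

theorem semStep_proj {q q' : Q} {a : α} {x : ℕ} (h : A.semStep q a q')
    (hx1 : 1 ≤ x) (hx : x ≤ A.semPrio q a) :
    A.δ (A.muHat x q) a = some (A.muHat x q') := by
  have hx' : x ≤ A.layerOf q a := hx
  have hstep := h.2
  have hkey := A.mu_step hstep (A.layerOf q a - x)
  have e1 : (A.μ)^[A.layerOf q a - x] (A.muHat (A.layerOf q a) q) = A.muHat x q := by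
    unfold muHat
    rw [← Function.iterate_add_apply]
    congr 1
    have := A.layerOf_le q a
    omega
  have e2 : (A.μ)^[A.layerOf q a - x] (A.muHat (A.layerOf q a) q') = A.muHat x q' := by
    unfold muHat
    rw [← Function.iterate_add_apply]
    congr 1
    have := A.layerOf_le_layer_target h
    omega
  rw [e1, e2] at hkey
  exact hkey

/-! #### run projections -/

theorem run_proj {w : ℕ → α} {ρ : ℕ → Q}
    (hρ : ∀ i, A.semStep (ρ i) (w i) (ρ (i + 1))) {x N : ℕ} (hx1 : 1 ≤ x)
    (hge : ∀ i, N ≤ i → x ≤ A.semPrio (ρ i) (w i)) (n : ℕ) :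
    A.runList (A.muHat x (ρ N)) (wordPrefix (wordDrop w N) n) = some (A.muHat x (ρ (N + n))) := by
  induction n with
  | zero => simp [wordPrefix_zero, runList_nil]
  | succ n ih =>
    rw [wordPrefix_succ, runList_append, ih]
    have hst := A.semStep_proj (hρ (N + n)) hx1 (hge (N + n) (by omega))
    simp only [Option.bind_some]
    rw [runList_singleton, wordDrop_apply, hst]
    rfl

theorem mu1_run {w : ℕ → α} {ρ : ℕ → Q}
    (hρ : ∀ i, A.semStep (ρ i) (w i) (ρ (i + 1))) (n : ℕ) :
    A.runList (A.muHat 1 (ρ 0)) (wordPrefix w n) = some (A.muHat 1 (ρ n)) := by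
  have := A.run_proj hρ (x := 1) (N := 0) le_rfl
    (fun i _ => A.one_le_semPrio (ρ i) (w i)) n
  rwa [wordDrop_zero, Nat.zero_add] at this

theorem safe_lock {w : ℕ → α} {ρ : ℕ → Q}
    (hρ : ∀ i, A.semStep (ρ i) (w i) (ρ (i + 1))) {M c : ℕ}
    (h1 : A.layer (A.muHat (c + 1) (ρ M)) = c + 1)
    (h2 : A.SafeInf (c + 1) (A.muHat (c + 1) (ρ M)) (wordDrop w M)) :
    ∀ i, M ≤ i → c + 1 ≤ A.semPrio (ρ i) (w i) := by
  set PM := A.muHat (c + 1) (ρ M) with hPM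
  have hPMfix : A.muHat (c + 1) PM = PM := A.muHat_of_le (by omega)
  have step : ∀ n, A.runList PM (wordPrefix (wordDrop w M) n) = some (A.muHat (c + 1) (ρ (M + n))) →
      c + 1 ≤ A.semPrio (ρ (M + n)) (w (M + n)) := by
    intro n hrn
    have hsf := h2 (n + 1)
    unfold SafeFin at hsf
    rw [hPMfix, wordPrefix_succ, runList_append, hrn] at hsf
    simp only [Option.bind_some] at hsf
    rw [runList_singleton, wordDrop_apply] at hsf
    have hlayn : A.layer (A.muHat (c + 1) (ρ (M + n))) = c + 1 := by
      rw [A.layer_runList hrn, h1]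
    have hge : c + 1 ≤ A.layer (ρ (M + n)) := A.le_layer_of_layer_muHat hlayn
    exact A.le_layerOf_of_isSome hge hsf
  have key : ∀ n, A.runList PM (wordPrefix (wordDrop w M) n) = some (A.muHat (c + 1) (ρ (M + n))) := by
    intro n
    induction n with
    | zero => simp [wordPrefix_zero, runList_nil, hPM]
    | succ n ih =>
      rw [wordPrefix_succ, runList_append, ih]
      have hprio := step n ih
      have hst := A.semStep_proj (hρ (M + n)) (by omega) hprio
      simp only [Option.bind_some]
      rw [runList_singleton, wordDrop_apply, hst]
      rfl
  intro i hi
  have : i = M + (i - M) := by omega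
  rw [this]
  exact step _ (key _)

theorem safeInf_shift {x : ℕ} {p t : Q} {w' : ℕ → α} {n : ℕ}
    (hx : A.layer p = x) (hsafe : A.SafeInf x p w')
    (ht : A.runList p (wordPrefix w' n) = some t) :
    A.layer t = x ∧ A.SafeInf x t (wordDrop w' n) := by
  have hlt : A.layer t = x := by rw [A.layer_runList ht, hx]
  refine ⟨hlt, fun m => ?_⟩
  unfold SafeFin
  rw [A.muHat_of_le (le_of_eq hlt)]
  have hs := hsafe (n + m)
  unfold SafeFin at hs
  rw [A.muHat_of_le (le_of_eq hx), wordPrefix_add, runList_append, ht] at hs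
  simpa using hs

end Layered

/-! #### pigeonhole and `minInfOften` -/

theorem freq_pigeonhole {f : ℕ → ℕ} {B : ℕ} (h : ∀ N, ∃ n, N ≤ n ∧ f n < B) :
    ∃ v, v < B ∧ ∀ N, ∃ n, N ≤ n ∧ f n = v := by
  have hinf : {n | f n < B}.Infinite := by
    apply Set.infinite_of_forall_exists_gt
    intro a
    obtain ⟨n, hn, hfn⟩ := h (a + 1)
    exact ⟨n, hfn, by omega⟩
  by_contra hc
  push_neg at hc
  apply hinf
  have hcover : {n | f n < B} ⊆ ⋃ v ∈ Finset.range B, {n | f n = v} := by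
    intro n hn
    simp only [Set.mem_iUnion, Set.mem_setOf_eq, Finset.mem_range]
    exact ⟨f n, hn, rfl⟩
  apply Set.Finite.subset _ hcover
  apply Set.Finite.biUnion (Finset.range B).finite_toSet
  intro v hv
  obtain ⟨N, hN⟩ := hc v (Finset.mem_range.1 hv)
  apply (Set.finite_Iio N).subset
  intro n hn
  simp only [Set.mem_setOf_eq] at hn
  simp only [Set.mem_Iio]
  by_contra hlt
  push_neg at hlt
  exact hN n hlt hn

theorem minInfOften_freq_and_le {f : ℕ → ℕ} {B : ℕ} (hbd : ∀ n, f n ≤ B) :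
    (∀ N, ∃ n, N ≤ n ∧ f n = minInfOften f) ∧
      ∃ N, ∀ i, N ≤ i → minInfOften f ≤ f i := by
  have hne : {x : ℕ | ∀ N : ℕ, ∃ n : ℕ, N ≤ n ∧ f n = x}.Nonempty := by
    obtain ⟨v, _, hv⟩ := freq_pigeonhole (f := f) (B := B + 1)
      (fun N => ⟨N, le_rfl, by have := hbd N; omega⟩)
    exact ⟨v, hv⟩
  have hmem := Nat.sInf_mem hne
  refine ⟨hmem, ?_⟩
  by_contra hc
  push_neg at hc
  obtain ⟨v, hvlt, hv⟩ := freq_pigeonhole hc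
  have : minInfOften f ≤ v := Nat.sInf_le hv
  omega

namespace Layered

variable {Q α : Type} {d : ℕ} (A : Layered Q α d)

/-! #### the safe-child condition -/

/-- The current successor-choice condition: there is a successor whose `(y+1)`-ancestor
(`y` the current priority) is safe on the rest of the word. -/
def Cond (A : Layered Q α d) (w : ℕ → α) (i : ℕ) (q : Q) (a : α) : Prop :=
  ∃ q', A.semStep q a q' ∧ A.layer (A.muHat (A.semPrio q a + 1) q') = A.semPrio q a + 1 ∧
    A.SafeInf (A.semPrio q a + 1) (A.muHat (A.semPrio q a + 1) q') (wordDrop w (i + 1))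

theorem cond_of_child {w : ℕ → α} {i : ℕ} {q : Q} {a : α} {p' : Q}
    (hp' : A.layer p' = A.semPrio q a + 1)
    (hδ : A.δ (A.muHat (A.semPrio q a) q) a = some (A.μ p'))
    (hs : A.SafeInf (A.semPrio q a + 1) p' (wordDrop w (i + 1))) : A.Cond w i q a := by
  obtain ⟨l, hl, hml⟩ := A.exists_leaf_above p'
  rw [hp'] at hml
  have hy1 := A.one_le_semPrio q a
  have hmu : A.muHat (A.semPrio q a) l = A.μ p' := by
    have h1 : A.muHat (A.semPrio q a) l
        = A.muHat (A.semPrio q a) (A.muHat (A.semPrio q a + 1) l) :=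
      (A.muHat_muHat hy1 (by omega)).symm
    rw [h1, hml]
    show (A.μ)^[A.layer p' - A.semPrio q a] p' = A.μ p'
    rw [show A.layer p' - A.semPrio q a = 1 by omega]
    simp
  refine ⟨l, ⟨hl, ?_⟩, ?_, ?_⟩
  · show A.δ (A.muHat (A.semPrio q a) q) a = some (A.muHat (A.semPrio q a) l)
    rw [hmu]
    exact hδ
  · rw [hml, hp']
  · rw [hml]
    exact hs

/-! #### the maximal ultimately safe layer -/

theorem ultSafeFrom_one {s : Q} (hs : A.layer s = 1) (w : ℕ → α) : A.UltSafeFrom s 1 w := by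
  refine ⟨0, s, hs, ?_, ?_⟩
  · rw [wordPrefix_zero, runList_nil, A.muHat_of_le (le_of_eq hs)]
  · intro n
    unfold SafeFin
    rw [A.muHat_of_le (le_of_eq hs)]
    exact A.complete1_runList hs _

theorem ultSafeFrom_le_d {s : Q} {x : ℕ} {w : ℕ → α} (h : A.UltSafeFrom s x w) : x ≤ d := by
  obtain ⟨n, p, hp, -, -⟩ := h
  rw [← hp]
  exact A.layer_le p

end Layered

/-- The maximal layer in which `w` is ultimately safe (from the layer-1 state `s`). -/
noncomputable def ultMax {Q α : Type} {d : ℕ} (A : Layered Q α d) (s : Q) (w : ℕ → α) : ℕ :=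
  Nat.findGreatest (fun x => A.UltSafeFrom s x w) d

namespace Layered

variable {Q α : Type} {d : ℕ} (A : Layered Q α d)

theorem one_le_ultMax {s : Q} (hs : A.layer s = 1) (w : ℕ → α) : 1 ≤ ultMax A s w :=
  Nat.le_findGreatest (by rw [← hs]; exact A.layer_le s) (A.ultSafeFrom_one hs w)

theorem ultMax_spec {s : Q} (hs : A.layer s = 1) (w : ℕ → α) :
    A.UltSafeFrom s (ultMax A s w) w := by
  have h1 := A.one_le_ultMax hs w
  exact Nat.findGreatest_of_ne_zero (P := fun x => A.UltSafeFrom s x w) (n := d) rfl (by omega)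

theorem le_ultMax {s : Q} {x : ℕ} {w : ℕ → α} (h : A.UltSafeFrom s x w) : x ≤ ultMax A s w :=
  Nat.le_findGreatest (A.ultSafeFrom_le_d h) h

/-- The family of states along the maximal safe run: each of them satisfies the
safety and no-escape clauses of strong acceptance/rejection. -/
theorem strong_family {s : Q} (hs : A.layer s = 1) (w : ℕ → α) :
    ∃ n₀ : ℕ, ∀ N, n₀ ≤ N → ∃ p₂ : Q, A.layer p₂ = ultMax A s w ∧
      A.runList s (wordPrefix w N) = some (A.muHat 1 p₂) ∧
      A.SafeInf (ultMax A s w) p₂ (wordDrop w N) ∧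
      ∀ n p', A.layer p' = ultMax A s w + 1 →
        A.runList p₂ (wordPrefix (wordDrop w N) n) = some (A.μ p') →
        ¬ A.SafeInf (A.layer p') p' (wordDrop (wordDrop w N) n) := by
  have hx1 := A.one_le_ultMax hs w
  obtain ⟨n₀, p₀, hlp₀, hrun₀, hsafe₀⟩ := A.ultMax_spec hs w
  have hfix₀ : A.muHat (ultMax A s w) p₀ = p₀ := A.muHat_of_le (le_of_eq hlp₀)
  refine ⟨n₀, fun N hN => ?_⟩
  have hNdecomp : N = n₀ + (N - n₀) := by omega
  have hsf := hsafe₀ (N - n₀)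
  unfold SafeFin at hsf
  rw [hfix₀] at hsf
  obtain ⟨p₂, hp₂⟩ := Option.isSome_iff_exists.1 hsf
  have hlp₂ : A.layer p₂ = ultMax A s w := by rw [A.layer_runList hp₂, hlp₀]
  have hrunN : A.runList s (wordPrefix w N) = some (A.muHat 1 p₂) := by
    rw [hNdecomp, wordPrefix_add, runList_append, hrun₀]
    simp only [Option.bind_some]
    exact A.runList_muHat hp₂ 1
  have hsafeN : A.SafeInf (ultMax A s w) p₂ (wordDrop w N) := by
    have h := (A.safeInf_shift hlp₀ hsafe₀ hp₂).2
    rwa [wordDrop_wordDrop, ← hNdecomp] at h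
  refine ⟨p₂, hlp₂, hrunN, hsafeN, ?_⟩
  intro n p' hlp' hrun' hsafe'
  have hcontra : A.UltSafeFrom s (ultMax A s w + 1) w := by
    refine ⟨N + n, p', hlp', ?_, ?_⟩
    · have h1 : A.runList (A.muHat 1 p₂) (wordPrefix (wordDrop w N) n)
          = some (A.muHat 1 (A.μ p')) := A.runList_muHat hrun' 1
      have h2 : A.muHat 1 (A.μ p') = A.muHat 1 p' := A.muHat_mu (by omega) (by omega)
      rw [wordPrefix_add, runList_append, hrunN]
      simp only [Option.bind_some]
      rw [h1, h2]
    · rw [hlp'] at hsafe'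
      rwa [wordDrop_wordDrop] at hsafe'
  have := A.le_ultMax hcontra
  omega

/-! #### the core argument -/

theorem core {w : ℕ → α} {ρ : ℕ → Q} {c N : ℕ}
    (hρ : ∀ i, A.semStep (ρ i) (w i) (ρ (i + 1)))
    (hinf : ∀ M, ∃ j, M ≤ j ∧ A.semPrio (ρ j) (w j) = c)
    (hge : ∀ i, N ≤ i → c ≤ A.semPrio (ρ i) (w i))
    (hc1 : 1 ≤ c)
    (hsel : ∀ j, A.semPrio (ρ j) (w j) = c → A.Cond w j (ρ j) (w j) →
      A.layer (A.muHat (c + 1) (ρ (j + 1))) = c + 1 ∧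
      A.SafeInf (c + 1) (A.muHat (c + 1) (ρ (j + 1))) (wordDrop w (j + 1))) :
    A.SafeInf c (A.muHat c (ρ N)) (wordDrop w N) ∧
    ∀ n p', A.layer p' = c + 1 →
      A.runList (A.muHat c (ρ N)) (wordPrefix (wordDrop w N) n) = some (A.μ p') →
      ¬ A.SafeInf (c + 1) p' (wordDrop (wordDrop w N) n) := by
  have hlayN : A.layer (A.muHat c (ρ N)) = c :=
    A.layer_muHat hc1 (le_trans (hge N le_rfl) (A.semPrio_le_layer _ _))
  have hfix : A.muHat c (A.muHat c (ρ N)) = A.muHat c (ρ N) := A.muHat_of_le (le_of_eq hlayN)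
  have hrun := A.run_proj hρ hc1 hge
  constructor
  · intro n
    unfold SafeFin
    rw [hfix, hrun n]
    rfl
  · intro n p' hlp' hrun' hsafe'
    have hμp' : A.μ p' = A.muHat c (ρ (N + n)) := by
      have h := hrun n
      rw [hrun'] at h
      exact Option.some.inj h
    obtain ⟨j, hjge, hjc⟩ := hinf (N + n)
    have hjeq : j = N + n + (j - (N + n)) := by omega
    set k := j - (N + n) with hk
    have hfixp' : A.muHat (c + 1) p' = p' := A.muHat_of_le (le_of_eq hlp')
    have hsafe'' : A.SafeInf (c + 1) p' (wordDrop w (N + n)) := by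
      rwa [wordDrop_wordDrop] at hsafe'
    have hsfk := hsafe'' k
    unfold SafeFin at hsfk
    rw [hfixp'] at hsfk
    obtain ⟨pk, hpk⟩ := Option.isSome_iff_exists.1 hsfk
    have hsfk1 := hsafe'' (k + 1)
    unfold SafeFin at hsfk1
    rw [hfixp', wordPrefix_succ, runList_append, hpk] at hsfk1
    simp only [Option.bind_some] at hsfk1
    rw [runList_singleton, wordDrop_apply] at hsfk1
    obtain ⟨P, hP⟩ := Option.isSome_iff_exists.1 hsfk1
    have hrunP : A.runList p' (wordPrefix (wordDrop w (N + n)) (k + 1)) = some P := by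
      rw [wordPrefix_succ, runList_append, hpk]
      simp only [Option.bind_some]
      rw [runList_singleton, wordDrop_apply, hP]
    have hmupk : A.runList (A.μ p') (wordPrefix (wordDrop w (N + n)) k) = some (A.μ pk) := by
      have h := A.runList_iterate_mu hpk 1
      simpa using h
    have hproj : A.runList (A.muHat c (ρ (N + n))) (wordPrefix (wordDrop w (N + n)) k)
        = some (A.muHat c (ρ (N + n + k))) :=
      A.run_proj hρ hc1 (fun i hi => hge i (by omega)) k
    rw [hμp'] at hmupk
    have hμpk : A.μ pk = A.muHat c (ρ (N + n + k)) := by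
      rw [hmupk] at hproj
      exact Option.some.inj hproj
    have hlpk : A.layer pk = c + 1 := by rw [A.layer_runList hpk, hlp']
    have hlP : A.layer P = c + 1 := by rw [A.δ_layer _ _ _ hP, hlpk]
    have hδμ : A.δ (A.μ pk) (w (N + n + k)) = some (A.μ P) := by
      have h := A.mu_step hP 1
      simpa using h
    have hcond : A.Cond w j (ρ j) (w j) := by
      apply A.cond_of_child (p' := P)
      · rw [hjc, hlP]
      · rw [hjc, hjeq, ← hμpk]
        exact hδμ
      · rw [hjc]
        have h := (A.safeInf_shift hlp' hsafe'' hrunP).2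
        rwa [wordDrop_wordDrop, show N + n + (k + 1) = j + 1 by omega] at h
    obtain ⟨hl1, hs1⟩ := hsel j hjc hcond
    have hlock := A.safe_lock hρ hl1 hs1
    obtain ⟨j2, hj2, hj2c⟩ := hinf (j + 1)
    have := hlock j2 hj2
    omega

theorem runPrios_apply (w : ℕ → α) (ρ : ℕ → Q) (i : ℕ) :
    A.runPrios w ρ i = A.semPrio (ρ i) (w i) := rfl

/-! #### Eve wins if the maximal ultimately safe layer is even -/

theorem sem_accept_of_even {s : Q} (hs : A.layer s = 1) (hcons : A.Consistent)
    {w : ℕ → α} (heven : Even (ultMax A s w)) {l : Q} (hl : A.muHat 1 l = s) :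
    A.SemAccept l w := by
  classical
  obtain ⟨n₀, hfam⟩ := A.strong_family hs w
  refine ⟨fun h q a => if hc : A.Cond w h.length q a then hc.choose
    else (A.semStep_total q a).choose, ?_, ?_⟩
  · intro h q a _
    show A.semStep q a (if hc : A.Cond w h.length q a then hc.choose
      else (A.semStep_total q a).choose)
    by_cases hc : A.Cond w h.length q a
    · rw [dif_pos hc]; exact hc.choose_spec.1
    · rw [dif_neg hc]; exact (A.semStep_total q a).choose_spec
  · intro ρ hρrun hconsE
    obtain ⟨hρ0, hρ⟩ := hρrun
    obtain ⟨hfreq, N₁, hN₁⟩ :=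
      minInfOften_freq_and_le (f := A.runPrios w ρ) (B := d) (fun n => A.semPrio_le_d _ _)
    unfold ParityAccept
    set c := minInfOften (A.runPrios w ρ) with hcdef
    rcases Nat.even_or_odd c with h | hodd
    · exact h
    exfalso
    have hfreq' : ∀ M, ∃ j, M ≤ j ∧ A.semPrio (ρ j) (w j) = c := hfreq
    have hN₁' : ∀ i, N₁ ≤ i → c ≤ A.semPrio (ρ i) (w i) := hN₁
    have hc1 : 1 ≤ c := by
      obtain ⟨n, -, hn⟩ := hfreq' 0
      rw [← hn]; exact A.one_le_semPrio _ _
    have hsel : ∀ j, A.semPrio (ρ j) (w j) = c → A.Cond w j (ρ j) (w j) →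
        A.layer (A.muHat (c + 1) (ρ (j + 1))) = c + 1 ∧
        A.SafeInf (c + 1) (A.muHat (c + 1) (ρ (j + 1))) (wordDrop w (j + 1)) := by
      intro j hjc hcond
      have hoddj : Odd (A.semPrio (ρ j) (w j)) := by rw [hjc]; exact hodd
      have hval : ρ (j + 1) = (if hc : A.Cond w
          (List.ofFn fun j' : Fin j => (ρ (j' : ℕ), w (j' : ℕ))).length (ρ j) (w j)
          then hc.choose else (A.semStep_total (ρ j) (w j)).choose) := hconsE j hoddj
      have hcnd' : A.Cond w
          (List.ofFn fun j' : Fin j => (ρ (j' : ℕ), w (j' : ℕ))).length (ρ j) (w j) := by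
        rw [List.length_ofFn]; exact hcond
      rw [dif_pos hcnd'] at hval
      have hspec := hcnd'.choose_spec
      rw [← hval] at hspec
      rw [List.length_ofFn, hjc] at hspec
      exact ⟨hspec.2.1, hspec.2.2⟩
    set N := max N₁ n₀ with hN
    have hge : ∀ i, N ≤ i → c ≤ A.semPrio (ρ i) (w i) := fun i hi =>
      hN₁' i (le_trans (le_max_left _ _) hi)
    have hcore := A.core hρ hfreq' hge hc1 hsel
    obtain ⟨p₂, hlp₂, hrunp₂, hsafep₂, hesc₂⟩ := hfam N (le_max_right _ _)
    have hlayp₁ : A.layer (A.muHat c (ρ N)) = c :=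
      A.layer_muHat hc1 (le_trans (hge N le_rfl) (A.semPrio_le_layer _ _))
    have hrej : A.StronglyRej (A.muHat c (ρ N)) (wordDrop w N) := by
      refine ⟨by rw [hlayp₁]; exact hodd, by rw [hlayp₁]; exact hcore.1, ?_⟩
      intro n p' hlp' hrun' hsafe'
      rw [hlayp₁] at hlp'
      rw [hlp'] at hsafe'
      exact hcore.2 n p' hlp' hrun' hsafe'
    have hacc : A.StronglyAcc p₂ (wordDrop w N) := by
      refine ⟨by rw [hlp₂]; exact heven, by rw [hlp₂]; exact hsafep₂, ?_⟩
      intro n p' hlp' hrun' hsafe'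
      rw [hlp₂] at hlp'
      exact hesc₂ n p' hlp' hrun' hsafe'
    have hμeq : A.muHat 1 p₂ = A.muHat 1 (A.muHat c (ρ N)) := by
      have h1 := A.mu1_run hρ N
      rw [hρ0, hl, hrunp₂] at h1
      rw [A.muHat_muHat le_rfl hc1]
      exact Option.some.inj h1
    exact hcons ⟨p₂, A.muHat c (ρ N), wordDrop w N, hμeq, hacc, hrej⟩

/-! #### Adam wins if the maximal ultimately safe layer is odd -/

theorem not_sem_accept_of_odd {s : Q} (hs : A.layer s = 1) (hcons : A.Consistent)
    {w : ℕ → α} (hoddx : Odd (ultMax A s w)) {l : Q} (hl : A.muHat 1 l = s) :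
    ¬ A.SemAccept l w := by
  classical
  rintro ⟨σ, hσ, hwin⟩
  obtain ⟨n₀, hfam⟩ := A.strong_family hs w
  let nxt : ℕ → List (Q × α) → Q → Q := fun i h q =>
    if Odd (A.semPrio q (w i)) then σ h q (w i)
    else if hc : A.Cond w i q (w i) then hc.choose else (A.semStep_total q (w i)).choose
  let st : ℕ → Q × List (Q × α) := fun n =>
    Nat.rec (l, []) (fun n p => (nxt n p.2 p.1, p.2 ++ [(p.1, w n)])) n
  let ρ : ℕ → Q := fun n => (st n).1
  have hstsucc : ∀ n, st (n + 1) = (nxt n (st n).2 (st n).1, (st n).2 ++ [((st n).1, w n)]) :=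
    fun n => rfl
  have hhist : ∀ n, (st n).2 = List.ofFn (fun j : Fin n => (ρ (j : ℕ), w (j : ℕ))) := by
    intro n
    induction n with
    | zero => simp [st]
    | succ n ih =>
      rw [hstsucc, List.ofFn_succ']
      simp only [List.concat_eq_append]
      rw [ih]
      congr 1
  have hρ0 : ρ 0 = l := rfl
  have hρstep : ∀ i, ρ (i + 1) = nxt i (List.ofFn fun j : Fin i => (ρ (j : ℕ), w (j : ℕ))) (ρ i) := by
    intro i
    show (st (i + 1)).1 = _
    rw [hstsucc]
    rw [← hhist i]
  have hρ : ∀ i, A.semStep (ρ i) (w i) (ρ (i + 1)) := by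
    intro i
    rw [hρstep i]
    show A.semStep (ρ i) (w i) (if Odd (A.semPrio (ρ i) (w i)) then _ else _)
    by_cases ho : Odd (A.semPrio (ρ i) (w i))
    · rw [if_pos ho]; exact hσ _ _ _ ho
    · rw [if_neg ho]
      by_cases hc : A.Cond w i (ρ i) (w i)
      · rw [dif_pos hc]; exact hc.choose_spec.1
      · rw [dif_neg hc]; exact (A.semStep_total _ _).choose_spec
  have hconsE : A.ConsEve σ w ρ := by
    intro i hoi
    rw [hρstep i]
    show (if Odd (A.semPrio (ρ i) (w i)) then _ else _) = _
    rw [if_pos hoi]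
  have hpar := hwin ρ ⟨hρ0, hρ⟩ hconsE
  unfold ParityAccept at hpar
  obtain ⟨hfreq, N₁, hN₁⟩ :=
    minInfOften_freq_and_le (f := A.runPrios w ρ) (B := d) (fun n => A.semPrio_le_d _ _)
  set c := minInfOften (A.runPrios w ρ) with hcdef
  have hfreq' : ∀ M, ∃ j, M ≤ j ∧ A.semPrio (ρ j) (w j) = c := hfreq
  have hN₁' : ∀ i, N₁ ≤ i → c ≤ A.semPrio (ρ i) (w i) := hN₁
  have hc1 : 1 ≤ c := by
    obtain ⟨n, -, hn⟩ := hfreq' 0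
    rw [← hn]; exact A.one_le_semPrio _ _
  have hsel : ∀ j, A.semPrio (ρ j) (w j) = c → A.Cond w j (ρ j) (w j) →
      A.layer (A.muHat (c + 1) (ρ (j + 1))) = c + 1 ∧
      A.SafeInf (c + 1) (A.muHat (c + 1) (ρ (j + 1))) (wordDrop w (j + 1)) := by
    intro j hjc hcond
    have hoddj : ¬ Odd (A.semPrio (ρ j) (w j)) := by
      rw [hjc, Nat.not_odd_iff_even]; exact hpar
    have hval : ρ (j + 1) = (if Odd (A.semPrio (ρ j) (w j)) then
        σ (List.ofFn fun j' : Fin j => (ρ (j' : ℕ), w (j' : ℕ))) (ρ j) (w j)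
        else if hc : A.Cond w j (ρ j) (w j) then hc.choose
        else (A.semStep_total (ρ j) (w j)).choose) := hρstep j
    rw [if_neg hoddj, dif_pos hcond] at hval
    have hspec := hcond.choose_spec
    rw [← hval] at hspec
    rw [hjc] at hspec
    exact ⟨hspec.2.1, hspec.2.2⟩
  set N := max N₁ n₀ with hN
  have hge : ∀ i, N ≤ i → c ≤ A.semPrio (ρ i) (w i) := fun i hi =>
    hN₁' i (le_trans (le_max_left _ _) hi)
  have hcore := A.core hρ hfreq' hge hc1 hsel
  obtain ⟨p₂, hlp₂, hrunp₂, hsafep₂, hesc₂⟩ := hfam N (le_max_right _ _)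
  have hlayp₁ : A.layer (A.muHat c (ρ N)) = c :=
    A.layer_muHat hc1 (le_trans (hge N le_rfl) (A.semPrio_le_layer _ _))
  have hacc : A.StronglyAcc (A.muHat c (ρ N)) (wordDrop w N) := by
    refine ⟨by rw [hlayp₁]; exact hpar, by rw [hlayp₁]; exact hcore.1, ?_⟩
    intro n p' hlp' hrun' hsafe'
    rw [hlayp₁] at hlp'
    rw [hlp'] at hsafe'
    exact hcore.2 n p' hlp' hrun' hsafe'
  have hrej : A.StronglyRej p₂ (wordDrop w N) := by
    refine ⟨by rw [hlp₂]; exact hoddx, by rw [hlp₂]; exact hsafep₂, ?_⟩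
    intro n p' hlp' hrun' hsafe'
    rw [hlp₂] at hlp'
    exact hesc₂ n p' hlp' hrun' hsafe'
  have hμeq : A.muHat 1 (A.muHat c (ρ N)) = A.muHat 1 p₂ := by
    have h1 := A.mu1_run hρ N
    rw [hρ0, hl, hrunp₂] at h1
    rw [A.muHat_muHat le_rfl hc1]
    exact (Option.some.inj h1).symm
  exact hcons ⟨A.muHat c (ρ N), p₂, wordDrop w N, hμeq, hacc, hrej⟩

/-! #### the main equivalence -/

theorem main_iff (hcons : A.Consistent) {s : Q} (hs : A.layer s = 1) {l : Q}
    (hl : A.muHat 1 l = s) (w : ℕ → α) :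
    A.SemAccept l w ↔ Even (ultMax A s w) := by
  constructor
  · intro hacc
    by_contra hodd
    rw [Nat.not_even_iff_odd] at hodd
    exact A.not_sem_accept_of_odd hs hcons hodd hl hacc
  · intro he
    exact A.sem_accept_of_even hs hcons he hl

end Layered

end Helpers

/-- For a consistent layered automaton `A`, layered acceptance coincides
with acceptance by the semantics automaton `⟦A⟧`, and `⟦A⟧` is uniformly semantically
deterministic. -/
theorem statement_0 {Q α : Type} [Fintype Q] [Fintype α] [Nonempty α] {d : ℕ} (hd : 1 ≤ d)
    (A : Layered Q α d) (hcons : A.Consistent)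
    (q0 : Q) (hq0 : A.IsLeaf q0) (hq0' : A.muHat 1 q0 = A.init) :
    (∀ w : ℕ → α, A.LayeredAcceptFrom A.init w ↔ A.SemAccept q0 w) ∧ A.UnifSD := by
  constructor
  · intro w
    rw [A.main_iff hcons A.init_layer hq0' w]
    constructor
    · rintro ⟨x, hev, hu, hmax⟩
      have h1 : x ≤ ultMax A A.init w := A.le_ultMax hu
      have h2 : ultMax A A.init w ≤ x := hmax _ (A.ultMax_spec A.init_layer w)
      rwa [show x = ultMax A A.init w by omega] at hev
    · intro hev
      exact ⟨ultMax A A.init w, hev, A.ultMax_spec A.init_layer w,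
        fun y hy => A.le_ultMax hy⟩
  · intro p q hp hq hμ w
    have hs : A.layer (A.muHat 1 p) = 1 := A.layer_muHat le_rfl (A.layer_pos p)
    rw [A.main_iff hcons hs rfl w, A.main_iff hcons hs hμ.symm w]
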